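/- Let m, n, p be positive integers with p > m+1 and n ≥ p, and let a, c be reals with a > −2m−1 and −2 < c < a+p. Set k₀ = (a−c+m+p−1)/(a+2m+p), so that 0 < k₀ < 1. If k₀ ≤ 2(p−m−1)/(n+p−1), then for all reals f₁ > f₂ > ⋯ > f_m > 0, setting g_i = 1/(1+(1−k₀)·f_i), for every index i: (n−p+2m−3)·f_i·k₀²·g_i² − 2·(p−m+1)·k₀·g_i + 4·k₀²·(1−k₀)·f_i²·g_i³ + 4·k₀·(1−k₀)·f_i·g_i² − 2·∑_{j≠i} (k₀²·f_i²·g_i² − k₀²·f_i·f_j·g_i·g_j + k₀·f_i·g_i − k₀·f_j·g_j)/(f_i − f_j) ≤ 0. -/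

import Mathlib

/-- Corollary 4.1(i) (deterministic content): for `p > m+1`, `n ≥ p`, `a > −2m−1`,
`−2 < c < a+p` and `k₀ = (a−c+m+p−1)/(a+2m+p)`, one has `0 < k₀ < 1`, and if
`k₀ ≤ 2(p−m−1)/(n+p−1)` then each diagonal entry of the unbiased estimate of the
matrix-quadratic risk difference of the generalized Bayes estimator is nonpositive. -/
theorem stmt_9 (m n p : ℕ) (hm : 0 < m) (hp : p > m + 1) (hn : n ≥ p)
    (a c : ℝ) (ha : a > -2 * m - 1) (hc1 : -2 < c) (hc2 : c < a + p)
    (k₀ : ℝ) (hk₀ : k₀ = (a - c + m + p - 1) / (a + 2 * m + p))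
    (hkcond : k₀ ≤ 2 * ((p : ℝ) - m - 1) / ((n : ℝ) + p - 1)) :
    (0 < k₀ ∧ k₀ < 1) ∧
    ∀ (f : Fin m → ℝ), (∀ i, 0 < f i) → (∀ i j : Fin m, i < j → f j < f i) →
      ∀ (g : Fin m → ℝ), (∀ i, g i = 1 / (1 + (1 - k₀) * f i)) →
      ∀ i : Fin m,
        ((n : ℝ) - p + 2 * m - 3) * f i * k₀ ^ 2 * g i ^ 2
          - 2 * ((p : ℝ) - m + 1) * k₀ * g i
          + 4 * k₀ ^ 2 * (1 - k₀) * f i ^ 2 * g i ^ 3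
          + 4 * k₀ * (1 - k₀) * f i * g i ^ 2
          - 2 * ∑ j ∈ Finset.univ.erase i,
              (k₀ ^ 2 * f i ^ 2 * g i ^ 2 - k₀ ^ 2 * f i * f j * g i * g j
                + k₀ * f i * g i - k₀ * f j * g j) / (f i - f j) ≤ 0 := by
  have hmR : (1 : ℝ) ≤ m := by exact_mod_cast hm
  have hpR : (m : ℝ) + 2 ≤ p := by exact_mod_cast hp
  have hnR : (p : ℝ) ≤ n := by exact_mod_cast hn
  have hd : (0 : ℝ) < a + 2 * m + p := by linarith
  have hnum : (0 : ℝ) < a - c + m + p - 1 := by linarith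
  have hk0 : 0 < k₀ := by rw [hk₀]; exact div_pos hnum hd
  have hk1 : k₀ < 1 := by rw [hk₀, div_lt_one hd]; linarith
  refine ⟨⟨hk0, hk1⟩, ?_⟩
  intro f hf hmono g hg i
  have hb : (0 : ℝ) < 1 - k₀ := by linarith
  have hdi : ∀ j, 0 < 1 + (1 - k₀) * f j := by
    intro j; have := mul_pos hb (hf j); linarith
  have hg0 : ∀ j, 0 < g j := by
    intro j; rw [hg j]; exact one_div_pos.mpr (hdi j)
  have hgs : ∀ j, (1 - k₀) * f j * g j = 1 - g j := by
    intro j; rw [hg j]; field_simp [(hdi j).ne']; ring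
  have hg1 : ∀ j, g j ≤ 1 := by
    intro j
    have h1 := mul_pos (mul_pos hb (hf j)) (hg0 j)
    have h2 := hgs j
    linarith
  -- the sum is nonnegative
  have hsum : 0 ≤ ∑ j ∈ Finset.univ.erase i,
      (k₀ ^ 2 * f i ^ 2 * g i ^ 2 - k₀ ^ 2 * f i * f j * g i * g j
        + k₀ * f i * g i - k₀ * f j * g j) / (f i - f j) := by
    apply Finset.sum_nonneg
    intro j hj
    have hji : j ≠ i := (Finset.mem_erase.mp hj).1
    have hfne : f i - f j ≠ 0 := by
      rcases lt_or_gt_of_ne (Ne.symm hji) with h | h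
      · have := hmono i j h; exact sub_ne_zero.mpr (ne_of_gt this)
      · have := hmono j i h; exact sub_ne_zero.mpr (ne_of_lt this)
    have hone : ∀ l : Fin m, g l * (1 + (1 - k₀) * f l) = 1 := by
      intro l; linear_combination hgs l
    have hdiff : f i * g i - f j * g j = (f i - f j) * (g i * g j) := by
      linear_combination (f j * g j) * (hone i) - (f i * g i) * (hone j)
    have hnum2 : k₀ ^ 2 * f i ^ 2 * g i ^ 2 - k₀ ^ 2 * f i * f j * g i * g j
        + k₀ * f i * g i - k₀ * f j * g j
        = k₀ * (k₀ * f i * g i + 1) * ((f i - f j) * (g i * g j)) := by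
      rw [← hdiff]; ring
    have hterm : (k₀ ^ 2 * f i ^ 2 * g i ^ 2 - k₀ ^ 2 * f i * f j * g i * g j
        + k₀ * f i * g i - k₀ * f j * g j) / (f i - f j)
        = k₀ * (k₀ * f i * g i + 1) * (g i * g j) := by
      rw [hnum2]
      field_simp [hfne]
    rw [hterm]
    have h1 : 0 < k₀ * f i * g i + 1 := by
      have := mul_pos (mul_pos hk0 (hf i)) (hg0 i); linarith
    exact le_of_lt (mul_pos (mul_pos hk0 h1) (mul_pos (hg0 i) (hg0 j)))
  have ht0 : 0 < k₀ * f i * g i := mul_pos (mul_pos hk0 (hf i)) (hg0 i)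
  have hnp : (0 : ℝ) < (n : ℝ) + p - 1 := by linarith
  have h1 : k₀ * ((n : ℝ) + p - 1) ≤ 2 * ((p : ℝ) - m - 1) :=
    (le_div_iff₀ hnp).mp hkcond
  have hkey : k₀ * ((n : ℝ) - p + 2 * m + 1) ≤ 2 * ((p : ℝ) - m - 1) * (1 - k₀) := by
    nlinarith [h1, hk0]
  have hA : k₀ * f i * g i * (((n : ℝ) - p + 2 * m + 1) - 4 * g i)
      ≤ 2 * ((p : ℝ) - m - 1) := by
    rcases le_or_gt (((n : ℝ) - p + 2 * m + 1) - 4 * g i) 0 with h | h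
    · have := mul_nonpos_of_nonneg_of_nonpos ht0.le h
      linarith
    · have he : (k₀ * f i * g i) * (1 - k₀) = k₀ * (1 - g i) := by
        rw [← hgs i]; ring
      have h2 : (k₀ * f i * g i) * (1 - k₀) ≤ k₀ := by
        have := mul_nonneg hk0.le (hg0 i).le
        rw [he]; nlinarith
      have h3 := mul_le_mul_of_nonneg_right h2 h.le
      nlinarith [mul_nonneg hk0.le (hg0 i).le]
  have hbr : ((n : ℝ) - p + 2 * m - 3) * (k₀ * f i * g i)
      + 4 * (k₀ * f i * g i) * (1 - g i) - 2 * ((p : ℝ) - m + 1) + 4 * (1 - g i) ≤ 0 := by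
    nlinarith [hA, hg0 i]
  have hfour : ((n : ℝ) - p + 2 * m - 3) * f i * k₀ ^ 2 * g i ^ 2
      - 2 * ((p : ℝ) - m + 1) * k₀ * g i
      + 4 * k₀ ^ 2 * (1 - k₀) * f i ^ 2 * g i ^ 3
      + 4 * k₀ * (1 - k₀) * f i * g i ^ 2 ≤ 0 := by
    have hid : ((n : ℝ) - p + 2 * m - 3) * f i * k₀ ^ 2 * g i ^ 2
        - 2 * ((p : ℝ) - m + 1) * k₀ * g i
        + 4 * k₀ ^ 2 * (1 - k₀) * f i ^ 2 * g i ^ 3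
        + 4 * k₀ * (1 - k₀) * f i * g i ^ 2
        = k₀ * g i * (((n : ℝ) - p + 2 * m - 3) * (k₀ * f i * g i)
          + 4 * (k₀ * f i * g i) * (1 - g i) - 2 * ((p : ℝ) - m + 1) + 4 * (1 - g i)) := by
      linear_combination (4 * k₀ ^ 2 * f i * g i ^ 2 + 4 * k₀ * g i) * (hgs i)
    rw [hid]
    exact mul_nonpos_of_nonneg_of_nonpos (mul_nonneg hk0.le (hg0 i).le) hbr
  linarith [hfour, hsum]
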